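/- Consider the subset-sum gadget SBMDP built from n ≥ 1, nonnegative weights m : Fin n → ℝ and discount factor γ ∈ (0,1). For every set I ⊆ Fin n, let π_I be the pure policy with π_I(q i) = action a if i ∈ I and π_I(q i) = action b if i ∉ I (decisions at the other states are irrelevant since both actions there coincide). Then the average value satisfies v̄(π_I)(q 0) = (∑ i, m i) + ∑ i ∉ I, m i, and the worst-case value satisfies v↓(π_I)(q 0) = ∑ i ∈ I, m i. -/

import Mathlib

/-- States of the subset-sum gadget SBMDP: an absorbing state `t` and,
for each `i : Fin n`, the four states `q i`, `sbar i`, `sdn i` (= s↓ i),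
`sup i` (= s↑ i). -/
inductive GState (n : ℕ) where
  | q : Fin n → GState n
  | sbar : Fin n → GState n
  | sdn : Fin n → GState n
  | sup : Fin n → GState n
  | t : GState n
  deriving DecidableEq, Fintype

/-- The two actions of the gadget. -/
inductive GAct where
  | a | b
  deriving DecidableEq

instance : Fintype GAct := ⟨{GAct.a, GAct.b}, fun x => by cases x <;> simp⟩

namespace GState

/-- Successor of stage `i`: `q (i+1)` if it exists, otherwise the absorbing state `t`. -/
def nxt {n : ℕ} (i : Fin n) : GState n :=
  if h : (i : ℕ) + 1 < n then GState.q ⟨(i : ℕ) + 1, h⟩ else GState.t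

/-- Dirac (indicator) probability row concentrated on `s`. -/
def ind {n : ℕ} (s : GState n) : GState n → ℝ :=
  fun t' => if t' = s then 1 else 0

/-- Lower transition-probability bounds of the gadget. -/
def lo {n : ℕ} : GState n → GAct → GState n → ℝ
  | .q i, .a => ind (.sbar i)
  | .q _, .b => fun _ => 0
  | .sbar i, _ => ind (nxt i)
  | .sdn i, _ => ind (nxt i)
  | .sup i, _ => ind (nxt i)
  | .t, _ => ind .t

/-- Upper transition-probability bounds of the gadget. -/
def hi {n : ℕ} : GState n → GAct → GState n → ℝ
  | .q i, .a => ind (.sbar i)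
  | .q i, .b => fun t' => if t' = GState.sdn i ∨ t' = GState.sup i then 1 else 0
  | .sbar i, _ => ind (nxt i)
  | .sdn i, _ => ind (nxt i)
  | .sup i, _ => ind (nxt i)
  | .t, _ => ind .t

/-- Average transition probabilities of the gadget. -/
noncomputable def avg {n : ℕ} : GState n → GAct → GState n → ℝ
  | .q i, .a => ind (.sbar i)
  | .q i, .b => fun t' => if t' = GState.sdn i ∨ t' = GState.sup i then 1 / 2 else 0
  | .sbar i, _ => ind (nxt i)
  | .sdn i, _ => ind (nxt i)
  | .sup i, _ => ind (nxt i)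
  | .t, _ => ind .t

/-- State-based (certain) rewards of the gadget, with `k i = 2 i + 1`. -/
noncomputable def rew {n : ℕ} (m : Fin n → ℝ) (γ : ℝ) : GState n → ℝ
  | .q _ => 0
  | .t => 0
  | .sdn _ => 0
  | .sbar i => m i / γ ^ (2 * (i : ℕ) + 1)
  | .sup i => 4 * m i / γ ^ (2 * (i : ℕ) + 1)

end GState

namespace GState

variable {n : ℕ}

lemma sum_ind (s : GState n) (v : GState n → ℝ) :
    ∑ t', ind s t' * v t' = v s := by
  rw [Finset.sum_eq_single s]
  · simp [ind]
  · intro b _ hb; simp [ind, hb]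
  · simp

lemma sum_ind_one (s : GState n) : ∑ t', ind s t' = (1:ℝ) := by
  have h := sum_ind s (fun _ => (1:ℝ))
  simpa using h

lemma det_set (s' : GState n) (v : GState n → ℝ) :
    {x | ∃ p : GState n → ℝ,
        ((∀ t', ind s' t' ≤ p t' ∧ p t' ≤ ind s' t') ∧ ∑ t', p t' = 1) ∧
          x = ∑ t', p t' * v t'} = {v s'} := by
  ext x
  simp only [Set.mem_setOf_eq, Set.mem_singleton_iff]
  constructor
  · rintro ⟨p, ⟨hp, _⟩, rfl⟩
    have hpe : p = ind s' := funext fun t' => le_antisymm (hp t').2 (hp t').1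
    rw [hpe, sum_ind]
  · rintro rfl
    exact ⟨ind s', ⟨fun t' => ⟨le_rfl, le_rfl⟩, sum_ind_one s'⟩, (sum_ind s' v).symm⟩

lemma sdn_ne_sup (i : Fin n) : (sdn i : GState n) ≠ sup i := by
  intro h; cases h

lemma sum_pair_supp (i : Fin n) (p v : GState n → ℝ)
    (hz : ∀ t', t' ≠ sdn i → t' ≠ sup i → p t' = 0) :
    ∑ t', p t' * v t' = p (sdn i) * v (sdn i) + p (sup i) * v (sup i) := by
  rw [← Finset.sum_subset (Finset.subset_univ ({sdn i, sup i} : Finset (GState n)))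
      (fun t' _ ht' => by
        simp only [Finset.mem_insert, Finset.mem_singleton, not_or] at ht'
        rw [hz t' ht'.1 ht'.2, zero_mul])]
  rw [Finset.sum_pair (sdn_ne_sup i)]

end GState

theorem stmt_14 (n : ℕ) (hn : 1 ≤ n) (m : Fin n → ℝ) (hm : ∀ i, 0 ≤ m i)
    (γ : ℝ) (hγ0 : 0 < γ) (hγ1 : γ < 1)
    (vd vb : (GState n → GAct) → GState n → ℝ)
    (hvd : ∀ (π : GState n → GAct) (s : GState n),
      vd π s = GState.rew m γ s + γ * sInf {x | ∃ p : GState n → ℝ,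
        ((∀ t', GState.lo s (π s) t' ≤ p t' ∧ p t' ≤ GState.hi s (π s) t') ∧
          ∑ t', p t' = 1) ∧ x = ∑ t', p t' * vd π t'})
    (hvb : ∀ (π : GState n → GAct) (s : GState n),
      vb π s = GState.rew m γ s + γ * ∑ t', GState.avg s (π s) t' * vb π t')
    (I : Finset (Fin n))
    (πI : GState n → GAct)
    (hπI : ∀ i : Fin n, πI (GState.q i) = if i ∈ I then GAct.a else GAct.b) :
    vb πI (GState.q ⟨0, hn⟩) = (∑ i, m i) + ∑ i ∈ Iᶜ, m i ∧
    vd πI (GState.q ⟨0, hn⟩) = ∑ i ∈ I, m i := by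
  classical
  have hγ : γ ≠ 0 := ne_of_gt hγ0
  -- value at absorbing state
  have hvbt : vb πI GState.t = 0 := by
    have h := hvb πI GState.t
    rw [show GState.avg (GState.t : GState n) (πI GState.t) = GState.ind GState.t from rfl,
      GState.sum_ind] at h
    simp only [GState.rew, zero_add] at h
    nlinarith [h]
  have hvdt : vd πI GState.t = 0 := by
    have h := hvd πI GState.t
    rw [show GState.lo (GState.t : GState n) (πI GState.t) = GState.ind GState.t from rfl] at h
    rw [show GState.hi (GState.t : GState n) (πI GState.t) = GState.ind GState.t from rfl] at h
    rw [GState.det_set, csInf_singleton] at h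
    simp only [GState.rew, zero_add] at h
    nlinarith [h]
  -- deterministic intermediate states, average values
  have hvb_sbar : ∀ i : Fin n, vb πI (GState.sbar i)
      = m i / γ ^ (2 * (i : ℕ) + 1) + γ * vb πI (GState.nxt i) := by
    intro i
    have h := hvb πI (GState.sbar i)
    rw [show GState.avg (GState.sbar i) (πI (GState.sbar i)) = GState.ind (GState.nxt i) by
        cases πI (GState.sbar i) <;> rfl, GState.sum_ind] at h
    simpa [GState.rew] using h
  have hvb_sdn : ∀ i : Fin n, vb πI (GState.sdn i) = γ * vb πI (GState.nxt i) := by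
    intro i
    have h := hvb πI (GState.sdn i)
    rw [show GState.avg (GState.sdn i) (πI (GState.sdn i)) = GState.ind (GState.nxt i) by
        cases πI (GState.sdn i) <;> rfl, GState.sum_ind] at h
    simpa [GState.rew] using h
  have hvb_sup : ∀ i : Fin n, vb πI (GState.sup i)
      = 4 * m i / γ ^ (2 * (i : ℕ) + 1) + γ * vb πI (GState.nxt i) := by
    intro i
    have h := hvb πI (GState.sup i)
    rw [show GState.avg (GState.sup i) (πI (GState.sup i)) = GState.ind (GState.nxt i) by
        cases πI (GState.sup i) <;> rfl, GState.sum_ind] at h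
    simpa [GState.rew] using h
  -- deterministic intermediate states, worst-case values
  have hvd_sbar : ∀ i : Fin n, vd πI (GState.sbar i)
      = m i / γ ^ (2 * (i : ℕ) + 1) + γ * vd πI (GState.nxt i) := by
    intro i
    have h := hvd πI (GState.sbar i)
    rw [show GState.lo (GState.sbar i) (πI (GState.sbar i)) = GState.ind (GState.nxt i) by
        cases πI (GState.sbar i) <;> rfl] at h
    rw [show GState.hi (GState.sbar i) (πI (GState.sbar i)) = GState.ind (GState.nxt i) by
        cases πI (GState.sbar i) <;> rfl] at h
    rw [GState.det_set, csInf_singleton] at h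
    simpa [GState.rew] using h
  have hvd_sdn : ∀ i : Fin n, vd πI (GState.sdn i) = γ * vd πI (GState.nxt i) := by
    intro i
    have h := hvd πI (GState.sdn i)
    rw [show GState.lo (GState.sdn i) (πI (GState.sdn i)) = GState.ind (GState.nxt i) by
        cases πI (GState.sdn i) <;> rfl] at h
    rw [show GState.hi (GState.sdn i) (πI (GState.sdn i)) = GState.ind (GState.nxt i) by
        cases πI (GState.sdn i) <;> rfl] at h
    rw [GState.det_set, csInf_singleton] at h
    simpa [GState.rew] using h
  have hvd_sup : ∀ i : Fin n, vd πI (GState.sup i)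
      = 4 * m i / γ ^ (2 * (i : ℕ) + 1) + γ * vd πI (GState.nxt i) := by
    intro i
    have h := hvd πI (GState.sup i)
    rw [show GState.lo (GState.sup i) (πI (GState.sup i)) = GState.ind (GState.nxt i) by
        cases πI (GState.sup i) <;> rfl] at h
    rw [show GState.hi (GState.sup i) (πI (GState.sup i)) = GState.ind (GState.nxt i) by
        cases πI (GState.sup i) <;> rfl] at h
    rw [GState.det_set, csInf_singleton] at h
    simpa [GState.rew] using h
  have hle : ∀ i : Fin n, vd πI (GState.sdn i) ≤ vd πI (GState.sup i) := by
    intro i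
    rw [hvd_sdn i, hvd_sup i]
    have : (0:ℝ) ≤ 4 * m i / γ ^ (2 * (i : ℕ) + 1) :=
      div_nonneg (by linarith [hm i]) (by positivity)
    linarith
  -- step equations at decision states
  have hvb_q : ∀ i : Fin n, vb πI (GState.q i)
      = (if i ∈ I then 1 else 2) * m i / γ ^ (2 * (i : ℕ)) + γ ^ 2 * vb πI (GState.nxt i) := by
    intro i
    have h := hvb πI (GState.q i)
    by_cases hi : i ∈ I
    · rw [hπI i, if_pos hi] at h
      rw [show GState.avg (GState.q i) GAct.a = GState.ind (GState.sbar i) from rfl,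
        GState.sum_ind] at h
      rw [h, hvb_sbar i]
      simp only [GState.rew, if_pos hi, pow_succ]
      field_simp
      ring
    · rw [hπI i, if_neg hi] at h
      have hz : ∀ t' : GState n, t' ≠ GState.sdn i → t' ≠ GState.sup i →
          GState.avg (GState.q i) GAct.b t' = 0 := by
        intro t' h1 h2
        simp [GState.avg, h1, h2]
      rw [GState.sum_pair_supp i _ _ hz] at h
      have e1 : GState.avg (GState.q i) GAct.b (GState.sdn i) = 1/2 := by simp [GState.avg]
      have e2 : GState.avg (GState.q i) GAct.b (GState.sup i) = 1/2 := by simp [GState.avg]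
      rw [e1, e2] at h
      rw [h, hvb_sdn i, hvb_sup i]
      simp only [GState.rew, if_neg hi, pow_succ]
      field_simp
      ring
  have hvd_q : ∀ i : Fin n, vd πI (GState.q i)
      = (if i ∈ I then 1 else 0) * m i / γ ^ (2 * (i : ℕ)) + γ ^ 2 * vd πI (GState.nxt i) := by
    intro i
    have h := hvd πI (GState.q i)
    by_cases hi : i ∈ I
    · rw [hπI i, if_pos hi] at h
      rw [show GState.lo (GState.q i) GAct.a = GState.ind (GState.sbar i) from rfl] at h
      rw [show GState.hi (GState.q i) GAct.a = GState.ind (GState.sbar i) from rfl] at h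
      rw [GState.det_set, csInf_singleton] at h
      rw [h, hvd_sbar i]
      simp only [GState.rew, if_pos hi, pow_succ]
      field_simp
      ring
    · rw [hπI i, if_neg hi] at h
      -- compute the infimum for action b
      set S : Set ℝ := {x | ∃ p : GState n → ℝ,
        ((∀ t', GState.lo (GState.q i) GAct.b t' ≤ p t' ∧
            p t' ≤ GState.hi (GState.q i) GAct.b t') ∧
          ∑ t', p t' = 1) ∧ x = ∑ t', p t' * vd πI t'} with hS
      have hmem : vd πI (GState.sdn i) ∈ S := by
        refine ⟨GState.ind (GState.sdn i), ⟨fun t' => ⟨?_, ?_⟩, GState.sum_ind_one _⟩,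
          (GState.sum_ind _ _).symm⟩
        · show (0:ℝ) ≤ GState.ind (GState.sdn i) t'
          unfold GState.ind
          split <;> norm_num
        · show GState.ind (GState.sdn i) t' ≤
            (if t' = GState.sdn i ∨ t' = GState.sup i then 1 else 0)
          unfold GState.ind
          by_cases ht : t' = GState.sdn i
          · simp [ht]
          · simp only [if_neg ht]
            split <;> norm_num
      have hlb : ∀ x ∈ S, vd πI (GState.sdn i) ≤ x := by
        rintro x ⟨p, ⟨hp, hsum⟩, rfl⟩
        have hz : ∀ t', t' ≠ GState.sdn i → t' ≠ GState.sup i → p t' = 0 := by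
          intro t' h1 h2
          have h2' := (hp t').2
          have h1' := (hp t').1
          simp only [GState.hi, h1, h2, or_self, if_false] at h2'
          simp only [GState.lo] at h1'
          linarith
        have hpair := GState.sum_pair_supp i p (vd πI) hz
        have hsum2 : p (GState.sdn i) + p (GState.sup i) = 1 := by
          have := GState.sum_pair_supp i p (fun _ => (1:ℝ)) hz
          simp only [mul_one] at this
          rw [← this, hsum]
        rw [hpair]
        have h1 := (hp (GState.sdn i)).1
        have h2 := (hp (GState.sup i)).1
        simp only [GState.lo] at h1 h2
        have e : vd πI (GState.sdn i)
            = p (GState.sdn i) * vd πI (GState.sdn i)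
              + p (GState.sup i) * vd πI (GState.sdn i) := by
          rw [← add_mul, hsum2, one_mul]
        have e2 := mul_le_mul_of_nonneg_left (hle i) h2
        linarith
      have hinf : sInf S = vd πI (GState.sdn i) :=
        le_antisymm (csInf_le ⟨_, fun x hx => hlb x hx⟩ hmem) (le_csInf ⟨_, hmem⟩ hlb)
      rw [hinf] at h
      rw [h, hvd_sdn i]
      simp only [GState.rew, if_neg hi, pow_succ]
      ring
  -- telescoping
  have tele : ∀ (f : GState n → ℝ) (c : Fin n → ℝ),
      f GState.t = 0 →
      (∀ i : Fin n, f (GState.q i)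
        = c i * m i / γ ^ (2 * (i : ℕ)) + γ ^ 2 * f (GState.nxt i)) →
      f (GState.q ⟨0, hn⟩) = ∑ i, c i * m i := by
    intro f c hft hstep
    have claim : ∀ d j, j + d = n →
        γ ^ (2 * j) * (if h : j < n then f (GState.q ⟨j, h⟩) else 0)
          = ∑ k ∈ Finset.Ico j n, (if h : k < n then c ⟨k, h⟩ * m ⟨k, h⟩ else 0) := by
      intro d
      induction d with
      | zero =>
        intro j hj
        simp only [Nat.add_zero] at hj
        subst hj
        rw [dif_neg (lt_irrefl j), Finset.Ico_self, Finset.sum_empty, mul_zero]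
      | succ d ih =>
        intro j hj
        have hjn : j < n := by omega
        rw [dif_pos hjn, hstep ⟨j, hjn⟩]
        have hnxt : γ ^ (2 * (j+1)) * (if h : j + 1 < n then f (GState.q ⟨j+1, h⟩) else 0)
            = γ ^ (2 * j) * (γ ^ 2 * f (GState.nxt ⟨j, hjn⟩)) := by
          unfold GState.nxt
          by_cases h2 : j + 1 < n
          · rw [dif_pos h2, dif_pos h2]
            ring
          · rw [dif_neg h2, dif_neg h2, hft]
            ring
        have hrec := ih (j+1) (by omega)
        rw [Finset.sum_eq_sum_Ico_succ_bot hjn, ← hrec, hnxt, dif_pos hjn]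
        have hpow : γ ^ (2 * j) ≠ 0 := pow_ne_zero _ hγ
        field_simp
    have h0 := claim n 0 (by omega)
    rw [dif_pos (by omega : 0 < n)] at h0
    simp only [mul_zero, pow_zero, one_mul] at h0
    rw [show (⟨0, hn⟩ : Fin n) = ⟨0, by omega⟩ from rfl, h0]
    rw [show Finset.Ico 0 n = Finset.range n from (Finset.range_eq_Ico n).symm,
      ← Fin.sum_univ_eq_sum_range (fun k => if h : k < n then c ⟨k, h⟩ * m ⟨k, h⟩ else 0) n]
    apply Finset.sum_congr rfl
    intro i _
    simp [i.isLt]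
  constructor
  · rw [tele (vb πI) (fun i => if i ∈ I then 1 else 2) hvbt hvb_q]
    rw [show (∑ i, m i) + ∑ i ∈ Iᶜ, m i
        = ∑ i, (m i + if i ∈ Iᶜ then m i else 0) by
      rw [Finset.sum_add_distrib, Finset.sum_ite_mem, Finset.univ_inter]]
    apply Finset.sum_congr rfl
    intro i _
    by_cases hi : i ∈ I <;> simp [hi]
    ring
  · rw [tele (vd πI) (fun i => if i ∈ I then 1 else 0) hvdt hvd_q]
    rw [show (∑ i ∈ I, m i) = ∑ i, (if i ∈ I then m i else 0) by
      rw [Finset.sum_ite_mem, Finset.univ_inter]]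
    apply Finset.sum_congr rfl
    intro i _
    by_cases hi : i ∈ I <;> simp [hi]
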